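/- arXiv:2007.13013 — 3 statements merged into one kernel-verified Lean document; each statement's English description precedes it below -/
import Mathlib

section
/- Let κ₁, κ₂ be real with 0 < κ₁ < κ₂ and let b₁ = (|α|²-κ₁²)^{1/2}, b₂ = (|α|²-κ₂²)^{1/2} for α ∈ ℝ² with |α| > κ₂. Set χ = |α|² - b₁b₂ and μ > 0. Then the 3×3 Hermitian matrix M̂ = -½(M + M*), where M = (iμ/χ)·[[α₁²β₁₂ + β₂χ, α₁α₂β₁₂, α₁β₂β₁₂], [α₁α₂β₁₂, α₂²β₁₂ + β₂χ, α₂β₂β₁₂], [-α₁β₂β₁₂, -α₂β₂β₁₂, κ₂²β₂]], with β_j = i b_j and β₁₂ = β₁ - β₂, is positive definite. -/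
set_option maxHeartbeats 1000000

open Complex Matrix ComplexOrder

lemma aux_mul_nonneg (c : ℝ) (hc : 0 ≤ c) {z : ℂ} (hz : 0 ≤ z) : 0 ≤ (c : ℂ) * z := by
  rw [Complex.nonneg_iff] at hz ⊢
  simp only [Complex.mul_re, Complex.mul_im, Complex.ofReal_re, Complex.ofReal_im]
  exact ⟨by nlinarith [hz.1], by rw [← hz.2]; ring⟩

lemma aux_mul_pos (c : ℝ) (hc : 0 < c) {z : ℂ} (hz : 0 < z) : 0 < (c : ℂ) * z := by
  rw [Complex.pos_iff] at hz ⊢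
  simp only [Complex.mul_re, Complex.mul_im, Complex.ofReal_re, Complex.ofReal_im]
  exact ⟨by nlinarith [hz.1], by rw [← hz.2]; ring⟩

lemma aux_smul_psd {n : Type*} [Fintype n] {P : Matrix n n ℂ} (hP : P.PosSemidef)
    (c : ℝ) (hc : 0 ≤ c) : ((c : ℂ) • P).PosSemidef := by
  refine Matrix.posSemidef_iff_dotProduct_mulVec.mpr ⟨?_, fun x => ?_⟩
  · unfold Matrix.IsHermitian
    rw [Matrix.conjTranspose_smul, hP.1.eq]
    congr 1
    simp
  · rw [Matrix.smul_mulVec, dotProduct_smul, smul_eq_mul]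
    exact aux_mul_nonneg c hc (hP.dotProduct_mulVec_nonneg x)

lemma aux_smul_one_pd {n : Type*} [Fintype n] [DecidableEq n]
    (d : ℝ) (hd : 0 < d) : ((d : ℂ) • (1 : Matrix n n ℂ)).PosDef := by
  refine Matrix.posDef_iff_dotProduct_mulVec.mpr ⟨?_, fun x hx => ?_⟩
  · unfold Matrix.IsHermitian
    rw [Matrix.conjTranspose_smul, Matrix.conjTranspose_one]
    congr 1
    simp
  · rw [Matrix.smul_mulVec, dotProduct_smul, Matrix.one_mulVec, smul_eq_mul]
    exact aux_mul_pos d hd (Matrix.dotProduct_star_self_pos_iff.mpr hx)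

open Complex Matrix ComplexOrder in
theorem stmt_5 (κ₁ κ₂ μ : ℝ) (hκ₁ : 0 < κ₁) (hκ : κ₁ < κ₂) (hμ : 0 < μ)
    (α₁ α₂ : ℝ) (hα : κ₂ ^ 2 < α₁ ^ 2 + α₂ ^ 2)
    (b₁ b₂ χ : ℝ) (β₁ β₂ β₁₂ : ℂ)
    (hb₁ : b₁ = Real.sqrt (α₁ ^ 2 + α₂ ^ 2 - κ₁ ^ 2))
    (hb₂ : b₂ = Real.sqrt (α₁ ^ 2 + α₂ ^ 2 - κ₂ ^ 2))
    (hχ : χ = α₁ ^ 2 + α₂ ^ 2 - b₁ * b₂)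
    (hβ₁ : β₁ = Complex.I * (b₁ : ℝ)) (hβ₂ : β₂ = Complex.I * (b₂ : ℝ))
    (hβ₁₂ : β₁₂ = β₁ - β₂)
    (M : Matrix (Fin 3) (Fin 3) ℂ)
    (hM : M = (Complex.I * (μ : ℝ) / (χ : ℝ)) •
      !![(α₁ : ℂ) ^ 2 * β₁₂ + β₂ * (χ : ℝ), (α₁ : ℂ) * (α₂ : ℝ) * β₁₂, (α₁ : ℂ) * β₂ * β₁₂;
         (α₁ : ℂ) * (α₂ : ℝ) * β₁₂, (α₂ : ℂ) ^ 2 * β₁₂ + β₂ * (χ : ℝ), (α₂ : ℂ) * β₂ * β₁₂;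
         -((α₁ : ℂ) * β₂ * β₁₂), -((α₂ : ℂ) * β₂ * β₁₂), (κ₂ ^ 2 : ℝ) * β₂]) :
    (-(1 / 2 : ℂ) • (M + Mᴴ)).PosDef := by
  -- basic real facts
  have hκ₂ : (0:ℝ) < κ₂ := lt_trans hκ₁ hκ
  have hb₂sq : b₂ ^ 2 = α₁ ^ 2 + α₂ ^ 2 - κ₂ ^ 2 := by
    rw [hb₂, Real.sq_sqrt (by linarith)]
  have hb₁sq : b₁ ^ 2 = α₁ ^ 2 + α₂ ^ 2 - κ₁ ^ 2 := by
    rw [hb₁, Real.sq_sqrt (by nlinarith)]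
  have hb₂pos : 0 < b₂ := by
    rw [hb₂]; exact Real.sqrt_pos.mpr (by linarith)
  have hb₁pos : 0 < b₁ := by
    rw [hb₁]; exact Real.sqrt_pos.mpr (by nlinarith)
  have hδ : 0 < b₁ - b₂ := by
    have : b₂ < b₁ := by
      rw [hb₁, hb₂]
      exact Real.sqrt_lt_sqrt (by linarith) (by nlinarith)
    linarith
  have hχpos : 0 < χ := by
    rw [hχ]
    nlinarith [hb₁sq, hb₂sq, hb₁pos, hb₂pos, sq_nonneg (b₁ - b₂)]
  have hχ0 : (χ : ℂ) ≠ 0 := by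
    exact_mod_cast ne_of_gt hχpos
  -- the rank-one factor
  have key : -(1 / 2 : ℂ) • (M + Mᴴ)
      = ((μ * (b₁ - b₂) / χ : ℝ) : ℂ) • ((!![(α₁ : ℂ), (α₂ : ℂ), Complex.I * (b₂ : ℝ)] : Matrix (Fin 1) (Fin 3) ℂ)ᴴ * !![(α₁ : ℂ), (α₂ : ℂ), Complex.I * (b₂ : ℝ)]) + ((μ * b₂ : ℝ) : ℂ) • (1 : Matrix (Fin 3) (Fin 3) ℂ) := by
    subst hβ₁ hβ₂ hβ₁₂ hM
    have hb₂sqC : (b₂:ℂ) ^ 2 = (α₁:ℂ) ^ 2 + (α₂:ℂ) ^ 2 - (κ₂:ℂ) ^ 2 := by exact_mod_cast congrArg (Complex.ofReal) hb₂sq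
    have hχC : (χ:ℂ) = (α₁:ℂ) ^ 2 + (α₂:ℂ) ^ 2 - (b₁:ℂ) * (b₂:ℂ) := by exact_mod_cast congrArg (Complex.ofReal) hχ
    clear hb₁ hb₂ hχ hb₂sq hb₁sq hκ hκ₁ hκ₂ hμ hα hb₂pos hb₁pos hδ hχpos
    have hI3 : Complex.I ^ 3 = -Complex.I := by
      rw [pow_succ, Complex.I_sq]; ring
    ext i j
    fin_cases i <;> fin_cases j
    all_goals simp [Matrix.mul_apply, Fin.sum_univ_succ, Matrix.one_apply]
    all_goals field_simp
    all_goals ring_nf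
    all_goals try simp only [hI3, Complex.I_sq]
    all_goals try ring_nf
    all_goals try linear_combination ((μ:ℂ) * (b₂:ℂ) * (χ:ℂ)) * hb₂sqC - ((μ:ℂ) * (b₂:ℂ) * (χ:ℂ)) * hχC
    all_goals linear_combination (-2 * (μ:ℂ) * (b₂:ℂ)) * hχC + (2 * (μ:ℂ) * (b₂:ℂ)) * hb₂sqC
  rw [key]
  exact Matrix.PosDef.posSemidef_add
    (aux_smul_psd (Matrix.posSemidef_conjTranspose_mul_self _) _
      (by positivity))
    (aux_smul_one_pd _ (by positivity))
end

section
/- Let ε > 0 and let φ : [a, b] → ℂ be continuously differentiable on an interval [a, b] with a < b. Then for any δ > 0, |φ(b)|² ≤ (δ⁻¹ + (b-a)⁻¹) ∫_a^b |φ(t)|² dt + δ ∫_a^b |φ'(t)|² dt. -/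
theorem stmt_6 (ε : ℝ) (hε : 0 < ε) (a b : ℝ) (hab : a < b)
    (φ φ' : ℝ → ℂ)
    (hderiv : ∀ t ∈ Set.Icc a b, HasDerivAt φ (φ' t) t)
    (hcont : ContinuousOn φ' (Set.Icc a b))
    (δ : ℝ) (hδ : 0 < δ) :
    ‖φ b‖ ^ 2 ≤
      (δ⁻¹ + (b - a)⁻¹) * ∫ t in a..b, ‖φ t‖ ^ 2 +
        δ * ∫ t in a..b, ‖φ' t‖ ^ 2 := by
  have hba : 0 < b - a := sub_pos.2 hab
  have habs : ∀ z : ℂ, ‖z‖ ^ 2 = z.re ^ 2 + z.im ^ 2 := fun z => by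
    rw [Complex.sq_norm, Complex.normSq_apply]; ring
  simp only [habs]
  set F : ℝ → ℝ := fun s => (φ s).re ^ 2 + (φ s).im ^ 2 with hF
  set G : ℝ → ℝ := fun s => (φ' s).re ^ 2 + (φ' s).im ^ 2 with hG
  set F' : ℝ → ℝ := fun s =>
    2 * (φ s).re * (φ' s).re + 2 * (φ s).im * (φ' s).im with hF'
  have hφc : ContinuousOn φ (Set.Icc a b) := fun t ht =>
    (hderiv t ht).continuousAt.continuousWithinAt
  have hFc : ContinuousOn F (Set.Icc a b) := by
    apply ContinuousOn.add
    · exact (Complex.continuous_re.comp_continuousOn hφc).pow 2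
    · exact (Complex.continuous_im.comp_continuousOn hφc).pow 2
  have hGc : ContinuousOn G (Set.Icc a b) := by
    apply ContinuousOn.add
    · exact (Complex.continuous_re.comp_continuousOn hcont).pow 2
    · exact (Complex.continuous_im.comp_continuousOn hcont).pow 2
  have hF'c : ContinuousOn F' (Set.Icc a b) := by
    apply ContinuousOn.add
    · exact (continuousOn_const.mul (Complex.continuous_re.comp_continuousOn hφc)).mul
        (Complex.continuous_re.comp_continuousOn hcont)
    · exact (continuousOn_const.mul (Complex.continuous_im.comp_continuousOn hφc)).mul
        (Complex.continuous_im.comp_continuousOn hcont)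
  have hFd : ∀ t ∈ Set.Icc a b, HasDerivAt F (F' t) t := by
    intro t ht
    have hre : HasDerivAt (fun s => (φ s).re) ((φ' t).re) t :=
      (Complex.reCLM.hasFDerivAt.comp_hasDerivAt t (hderiv t ht))
    have him : HasDerivAt (fun s => (φ s).im) ((φ' t).im) t :=
      (Complex.imCLM.hasFDerivAt.comp_hasDerivAt t (hderiv t ht))
    have := ((hre.mul hre).add (him.mul him))
    convert this using 1
    · rfl
    · rfl
    · funext s; simp [hF]; ring
    · simp [hF']; ring
  -- pointwise Young bound
  have hpt : ∀ s ∈ Set.Icc a b, F' s ≤ δ⁻¹ * F s + δ * G s := by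
    intro s _
    have h1 : δ * δ⁻¹ = 1 := mul_inv_cancel₀ hδ.ne'
    simp only [hF, hG, hF']
    nlinarith [sq_nonneg ((φ s).re - δ * (φ' s).re), sq_nonneg ((φ s).im - δ * (φ' s).im),
      hδ.le, inv_nonneg.2 hδ.le, sq_nonneg (φ' s).re, sq_nonneg (φ' s).im]
  set C : ℝ := δ⁻¹ * (∫ t in a..b, F t) + δ * ∫ t in a..b, G t with hC
  -- key per-point inequality
  have key : ∀ t ∈ Set.Icc a b, F b ≤ F t + C := by
    intro t ht
    have htb : t ≤ b := ht.2
    have hsub : Set.Icc t b ⊆ Set.Icc a b := Set.Icc_subset_Icc ht.1 le_rfl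
    have hftc : ∫ s in t..b, F' s = F b - F t := by
      apply intervalIntegral.integral_eq_sub_of_hasDerivAt
      · intro x hx
        rw [Set.uIcc_of_le htb] at hx
        exact hFd x (hsub hx)
      · exact (hF'c.mono hsub).intervalIntegrable_of_Icc htb
    have hint1 : (∫ s in t..b, F' s) ≤ ∫ s in t..b, δ⁻¹ * F s + δ * G s := by
      apply intervalIntegral.integral_mono_on htb
      · exact (hF'c.mono hsub).intervalIntegrable_of_Icc htb
      · exact (((hFc.mono hsub).const_smul δ⁻¹).add ((hGc.mono hsub).const_smul δ)
          |>.intervalIntegrable_of_Icc htb)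
      · intro x hx; exact hpt x (hsub hx)
    have hint2 : (∫ s in t..b, δ⁻¹ * F s + δ * G s) ≤ ∫ s in a..b, δ⁻¹ * F s + δ * G s := by
      apply intervalIntegral.integral_mono_interval ht.1 htb le_rfl
      · filter_upwards with x
        have : (0:ℝ) ≤ F x := by positivity
        have : (0:ℝ) ≤ G x := by positivity
        positivity
      · exact ((hFc.const_smul δ⁻¹).add (hGc.const_smul δ)).intervalIntegrable_of_Icc hab.le
    have hsplit : (∫ s in a..b, δ⁻¹ * F s + δ * G s) = C := by
      rw [intervalIntegral.integral_add, intervalIntegral.integral_const_mul,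
        intervalIntegral.integral_const_mul]
      · exact ((hFc.const_smul δ⁻¹)).intervalIntegrable_of_Icc hab.le
      · exact ((hGc.const_smul δ)).intervalIntegrable_of_Icc hab.le
    have hfin : F b - F t ≤ C := by
      calc F b - F t = ∫ s in t..b, F' s := hftc.symm
        _ ≤ _ := hint1
        _ ≤ _ := hint2
        _ = C := hsplit
    linarith
  -- average over t
  have havg : (b - a) * F b ≤ (∫ t in a..b, F t) + (b - a) * C := by
    have h1 : (∫ _ in a..b, F b) ≤ ∫ t in a..b, F t + C := by
      apply intervalIntegral.integral_mono_on hab.le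
      · exact intervalIntegrable_const
      · exact (hFc.add continuousOn_const).intervalIntegrable_of_Icc hab.le
      · exact key
    rw [intervalIntegral.integral_const, smul_eq_mul] at h1
    rw [intervalIntegral.integral_add (hFc.intervalIntegrable_of_Icc hab.le)
      intervalIntegrable_const, intervalIntegral.integral_const, smul_eq_mul] at h1
    linarith
  have hinv : (b - a) * (b - a)⁻¹ = 1 := mul_inv_cancel₀ hba.ne'
  have hdinv : δ * δ⁻¹ = 1 := mul_inv_cancel₀ hδ.ne'
  rw [hC] at havg
  set I : ℝ := ∫ t in a..b, F t with hI
  set J : ℝ := ∫ t in a..b, G t with hJdef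
  have hJ : 0 ≤ J := by
    rw [hJdef]
    exact intervalIntegral.integral_nonneg hab.le (fun u _ => by positivity)
  have hmain : F b ≤ (δ⁻¹ + (b - a)⁻¹) * I + δ * J := by
    rw [← mul_le_mul_iff_of_pos_left hba]
    calc (b - a) * F b ≤ I + (b - a) * (δ⁻¹ * I + δ * J) := havg
      _ = (b - a) * ((δ⁻¹ + (b - a)⁻¹) * I + δ * J) := by
          field_simp
          ring
  have hgoal : (∫ t in a..b, F t + δ * J) = I + (b - a) * (δ * J) := by
    rw [intervalIntegral.integral_add (hFc.intervalIntegrable_of_Icc hab.le)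
      intervalIntegrable_const, intervalIntegral.integral_const, smul_eq_mul, hI]
  rw [hgoal]
  have h5 : δ * J ≤ (δ⁻¹ + (b - a)⁻¹) * ((b - a) * (δ * J)) := by
    have e : (δ⁻¹ + (b - a)⁻¹) * ((b - a) * (δ * J)) = δ⁻¹ * (b - a) * (δ * J) + δ * J := by
      field_simp
    have h6 : 0 ≤ δ⁻¹ * (b - a) * (δ * J) := by positivity
    rw [e]; linarith
  have hIne : δ⁻¹ * I + (b - a)⁻¹ * I = (δ⁻¹ + (b - a)⁻¹) * I := by ring
  calc F b ≤ (δ⁻¹ + (b - a)⁻¹) * I + δ * J := hmain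
    _ ≤ (δ⁻¹ + (b - a)⁻¹) * I + (δ⁻¹ + (b - a)⁻¹) * ((b - a) * (δ * J)) := by linarith
    _ = (δ⁻¹ + (b - a)⁻¹) * (I + (b - a) * (δ * J)) := by ring
end

section
/- Let κ₁, κ₂ with 0 < κ₁ < κ₂, α = (α₁, α₂) ∈ ℝ² with |α| > κ₂, b₁ = (|α|²-κ₁²)^{1/2}, b₂ = (|α|²-κ₂²)^{1/2}. Then |α₁²(b₁ - b₂)| ≤ |α₁|² (κ₂² - κ₁²)/(b₁ + b₂), and consequently the entry M₁₁ = (iμ/χ)(α₁²(β₁ - β₂) + β₂χ) of the elastic DtN matrix (with β_j = i b_j and χ = |α|² - b₁b₂) satisfies |M₁₁| ≤ C(κ₁, κ₂, μ)(1 + |α|). -/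
set_option maxHeartbeats 2000000

theorem stmt_11 (κ₁ κ₂ μ : ℝ) (hκ₁ : 0 < κ₁) (hκ : κ₁ < κ₂) (hμ : 0 < μ) :
    (∀ α₁ α₂ : ℝ, κ₂ ^ 2 < α₁ ^ 2 + α₂ ^ 2 →
      |α₁ ^ 2 * (Real.sqrt (α₁ ^ 2 + α₂ ^ 2 - κ₁ ^ 2) - Real.sqrt (α₁ ^ 2 + α₂ ^ 2 - κ₂ ^ 2))| ≤
        α₁ ^ 2 * (κ₂ ^ 2 - κ₁ ^ 2) /
          (Real.sqrt (α₁ ^ 2 + α₂ ^ 2 - κ₁ ^ 2) + Real.sqrt (α₁ ^ 2 + α₂ ^ 2 - κ₂ ^ 2))) ∧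
    ∃ C : ℝ, 0 < C ∧ ∀ α₁ α₂ : ℝ, κ₂ ^ 2 < α₁ ^ 2 + α₂ ^ 2 →
      ‖((Complex.I * (μ : ℝ) /
            ((α₁ ^ 2 + α₂ ^ 2 -
              Real.sqrt (α₁ ^ 2 + α₂ ^ 2 - κ₁ ^ 2) * Real.sqrt (α₁ ^ 2 + α₂ ^ 2 - κ₂ ^ 2) : ℝ) : ℂ)) *
          ((α₁ : ℂ) ^ 2 *
              (Complex.I * (Real.sqrt (α₁ ^ 2 + α₂ ^ 2 - κ₁ ^ 2) : ℝ) -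
                Complex.I * (Real.sqrt (α₁ ^ 2 + α₂ ^ 2 - κ₂ ^ 2) : ℝ)) +
            Complex.I * (Real.sqrt (α₁ ^ 2 + α₂ ^ 2 - κ₂ ^ 2) : ℝ) *
              ((α₁ ^ 2 + α₂ ^ 2 -
                Real.sqrt (α₁ ^ 2 + α₂ ^ 2 - κ₁ ^ 2) * Real.sqrt (α₁ ^ 2 + α₂ ^ 2 - κ₂ ^ 2) : ℝ) : ℂ)))‖ ≤
      C * (1 + Real.sqrt (α₁ ^ 2 + α₂ ^ 2)) := by
  have hκκ : κ₁ ^ 2 < κ₂ ^ 2 := by nlinarith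
  have hκ₂pos : (0:ℝ) < κ₂ ^ 2 := pow_pos (lt_trans hκ₁ hκ) 2
  constructor
  · intro α₁ α₂ hs
    have h1 : (0:ℝ) ≤ α₁ ^ 2 + α₂ ^ 2 - κ₁ ^ 2 := by nlinarith
    have h2 : (0:ℝ) ≤ α₁ ^ 2 + α₂ ^ 2 - κ₂ ^ 2 := by nlinarith
    set b₁ := Real.sqrt (α₁ ^ 2 + α₂ ^ 2 - κ₁ ^ 2) with hb₁
    set b₂ := Real.sqrt (α₁ ^ 2 + α₂ ^ 2 - κ₂ ^ 2) with hb₂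
    have hb1sq : b₁ ^ 2 = α₁ ^ 2 + α₂ ^ 2 - κ₁ ^ 2 := Real.sq_sqrt h1
    have hb2sq : b₂ ^ 2 = α₁ ^ 2 + α₂ ^ 2 - κ₂ ^ 2 := Real.sq_sqrt h2
    have hb1pos : 0 < b₁ := Real.sqrt_pos.mpr (by nlinarith)
    have hb2nn : 0 ≤ b₂ := Real.sqrt_nonneg _
    have hle : b₂ ≤ b₁ := Real.sqrt_le_sqrt (by linarith)
    have hsum : 0 < b₁ + b₂ := by linarith
    rw [abs_of_nonneg (by nlinarith [sq_nonneg α₁])]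
    refine le_of_eq ?_
    rw [eq_div_iff hsum.ne']
    nlinarith [sq_nonneg α₁]
  · have hc0arg : (0:ℝ) < 1 - κ₁ ^ 2 / κ₂ ^ 2 := by
      have : κ₁ ^ 2 / κ₂ ^ 2 < 1 := (div_lt_one hκ₂pos).mpr hκκ
      linarith
    set c₀ := Real.sqrt (1 - κ₁ ^ 2 / κ₂ ^ 2) with hc₀
    have hc0pos : 0 < c₀ := Real.sqrt_pos.mpr hc0arg
    refine ⟨(μ * (κ₂ ^ 2 - κ₁ ^ 2) + μ * c₀ * κ₁ ^ 2 + c₀ * κ₁ ^ 2) / (c₀ * κ₁ ^ 2),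
      div_pos (by nlinarith [mul_pos hμ (sub_pos.mpr hκκ), mul_pos (mul_pos hμ hc0pos) (pow_pos hκ₁ 2), mul_pos hc0pos (pow_pos hκ₁ 2)]) (mul_pos hc0pos (pow_pos hκ₁ 2)), ?_⟩
    intro α₁ α₂ hs
    set C := (μ * (κ₂ ^ 2 - κ₁ ^ 2) + μ * c₀ * κ₁ ^ 2 + c₀ * κ₁ ^ 2) / (c₀ * κ₁ ^ 2) with hCdef
    have hC : C * (c₀ * κ₁ ^ 2) = μ * (κ₂ ^ 2 - κ₁ ^ 2) + μ * c₀ * κ₁ ^ 2 + c₀ * κ₁ ^ 2 := by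
      rw [hCdef]; field_simp
    have h1 : (0:ℝ) ≤ α₁ ^ 2 + α₂ ^ 2 - κ₁ ^ 2 := by nlinarith
    have h2 : (0:ℝ) ≤ α₁ ^ 2 + α₂ ^ 2 - κ₂ ^ 2 := by nlinarith
    have hspos : (0:ℝ) < α₁ ^ 2 + α₂ ^ 2 := by nlinarith
    set s := α₁ ^ 2 + α₂ ^ 2 with hsdef
    set b₁ := Real.sqrt (s - κ₁ ^ 2) with hb₁
    set b₂ := Real.sqrt (s - κ₂ ^ 2) with hb₂
    set t := Real.sqrt s with ht
    have hb1sq : b₁ ^ 2 = s - κ₁ ^ 2 := Real.sq_sqrt h1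
    have hb2sq : b₂ ^ 2 = s - κ₂ ^ 2 := Real.sq_sqrt h2
    have htsq : t ^ 2 = s := Real.sq_sqrt hspos.le
    have hb1pos : 0 < b₁ := Real.sqrt_pos.mpr (by linarith)
    have hb2nn : 0 ≤ b₂ := Real.sqrt_nonneg _
    have htpos : 0 < t := Real.sqrt_pos.mpr hspos
    have hle : b₂ ≤ b₁ := Real.sqrt_le_sqrt (by linarith)
    have hb2t : b₂ ≤ t := Real.sqrt_le_sqrt (by nlinarith)
    have hα₁t : α₁ ^ 2 ≤ t ^ 2 := by rw [htsq]; nlinarith [sq_nonneg α₂]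
    have hbb : b₁ * b₂ ≤ s - κ₁ ^ 2 := by nlinarith
    set χ := s - b₁ * b₂ with hχdef
    have hχlb : κ₁ ^ 2 ≤ χ := by rw [hχdef]; linarith
    have hχpos : 0 < χ := lt_of_lt_of_le (pow_pos hκ₁ 2) hχlb
    have hct : c₀ * t ≤ b₁ := by
      rw [hc₀, ht, hb₁, ← Real.sqrt_mul hc0arg.le]
      apply Real.sqrt_le_sqrt
      have hq : 1 - κ₁ ^ 2 / κ₂ ^ 2 = (κ₂ ^ 2 - κ₁ ^ 2) / κ₂ ^ 2 := by rw [sub_div, div_self hκ₂pos.ne']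
      rw [hq, div_mul_eq_mul_div, div_le_iff₀ hκ₂pos]
      nlinarith
    have f1 : (b₁ - b₂) * (c₀ * t) ≤ κ₂ ^ 2 - κ₁ ^ 2 := by nlinarith
    have hdiff : 0 ≤ b₁ - b₂ := by linarith
    -- key complex identity
    have key :
        (Complex.I * (μ : ℝ) / ((s - b₁ * b₂ : ℝ) : ℂ)) *
          ((α₁ : ℂ) ^ 2 * (Complex.I * (b₁ : ℝ) - Complex.I * (b₂ : ℝ)) +
            Complex.I * (b₂ : ℝ) * ((s - b₁ * b₂ : ℝ) : ℂ)) =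
          ((-(μ * (α₁ ^ 2 * (b₁ - b₂) + b₂ * χ) / χ) : ℝ) : ℂ) := by
      have hχne : ((s - b₁ * b₂ : ℝ) : ℂ) ≠ 0 := by
        rw [← hχdef]; exact_mod_cast hχpos.ne'
      rw [hχdef]
      push_cast
      field_simp
      ring_nf
      rw [Complex.I_sq]
      ring
    rw [key, Complex.norm_real, Real.norm_eq_abs, abs_neg,
      abs_of_nonneg (div_nonneg (by nlinarith [mul_nonneg hμ.le (mul_nonneg (sq_nonneg α₁) hdiff), mul_nonneg hμ.le (mul_nonneg hb2nn hχpos.le)]) hχpos.le),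
      div_le_iff₀ hχpos]
    -- main inequality, cleared of the χ denominator
    have G : μ * (α₁ ^ 2 * (b₁ - b₂) + b₂ * χ) * (c₀ * κ₁ ^ 2) ≤
        C * (1 + t) * χ * (c₀ * κ₁ ^ 2) := by
      have hR : C * (1 + t) * χ * (c₀ * κ₁ ^ 2) =
          (μ * (κ₂ ^ 2 - κ₁ ^ 2) + μ * c₀ * κ₁ ^ 2 + c₀ * κ₁ ^ 2) * ((1 + t) * χ) := by
        linear_combination ((1 + t) * χ) * hC
      rw [hR]
      have p1 : μ * α₁ ^ 2 * (b₁ - b₂) * c₀ * κ₁ ^ 2 ≤ μ * t * (κ₂ ^ 2 - κ₁ ^ 2) * κ₁ ^ 2 := by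
        have hA : μ * t * ((b₁ - b₂) * (c₀ * t)) ≤ μ * t * (κ₂ ^ 2 - κ₁ ^ 2) :=
          mul_le_mul_of_nonneg_left f1 (mul_nonneg hμ.le htpos.le)
        have hB : 0 ≤ μ * ((t ^ 2 - α₁ ^ 2) * ((b₁ - b₂) * c₀)) :=
          mul_nonneg hμ.le (mul_nonneg (sub_nonneg.mpr hα₁t) (mul_nonneg hdiff hc0pos.le))
        nlinarith [mul_le_mul_of_nonneg_right hA (sq_nonneg κ₁),
          mul_le_mul_of_nonneg_right hB (sq_nonneg κ₁)]
      have p2 : μ * t * (κ₂ ^ 2 - κ₁ ^ 2) * κ₁ ^ 2 ≤ μ * t * (κ₂ ^ 2 - κ₁ ^ 2) * χ :=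
        mul_le_mul_of_nonneg_left hχlb (mul_nonneg (mul_nonneg hμ.le htpos.le) (sub_nonneg.mpr hκκ.le))
      have p2b : 0 ≤ χ * (μ * (κ₂ ^ 2 - κ₁ ^ 2)) :=
        mul_nonneg hχpos.le (mul_nonneg hμ.le (sub_nonneg.mpr hκκ.le))
      have p3 : μ * b₂ * χ * (c₀ * κ₁ ^ 2) ≤ μ * (1 + t) * χ * (c₀ * κ₁ ^ 2) := by
        have : b₂ ≤ 1 + t := by linarith
        nlinarith [mul_le_mul_of_nonneg_right this (mul_nonneg (mul_nonneg hμ.le hχpos.le) (mul_nonneg hc0pos.le (sq_nonneg κ₁)) : (0:ℝ) ≤ μ * χ * (c₀ * κ₁ ^ 2))]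
      have p4 : 0 ≤ (1 + t) * χ * (c₀ * κ₁ ^ 2) := mul_nonneg (mul_nonneg (by linarith : (0:ℝ) ≤ 1 + t) hχpos.le) (mul_nonneg hc0pos.le (sq_nonneg κ₁))
      nlinarith [p1, p2, p2b, p3, p4]
    have := le_of_mul_le_mul_right G (mul_pos hc0pos (pow_pos hκ₁ 2))
    linarith [this]
end
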